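/- arXiv:2004.03890 — 2 statements merged into one kernel-verified Lean document; each statement's English description precedes it below -/
import Mathlib

section
/- Every permutation of cycle type 3^2 in A_12 is the product of two involutions of cycle type 2^6 in A_12. -/
open Equiv Equiv.Perm

private lemma disj {σ τ : Perm (Fin 12)} (h : ∀ x, σ x = x ∨ τ x = x) : σ.Disjoint τ := h

set_option maxRecDepth 4000

private def sw (i j : Fin 12) : Perm (Fin 12) := Equiv.swap i j

private lemma cycleType_sw {i j : Fin 12} (h : i ≠ j) : (sw i j).cycleType = {2} := by
  rw [sw, (isCycle_swap h).cycleType, card_support_swap h]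

private def s0 : Perm (Fin 12) :=
  sw 0 4 * (sw 1 3 * (sw 2 5 * (sw 6 7 * (sw 8 9 * sw 10 11))))

private def t0 : Perm (Fin 12) :=
  sw 0 3 * (sw 1 5 * (sw 2 4 * (sw 6 7 * (sw 8 9 * sw 10 11))))

private def g0 : Perm (Fin 12) :=
  (sw 0 1 * sw 0 2) * (sw 3 4 * sw 3 5)

private lemma cycleType_s0 : s0.cycleType = Multiset.replicate 6 2 := by
  rw [s0, Equiv.Perm.Disjoint.cycleType_mul (disj (by decide) : Equiv.Perm.Disjoint (sw 0 4) (sw 1 3 * (sw 2 5 * (sw 6 7 * (sw 8 9 * sw 10 11))))),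
    Equiv.Perm.Disjoint.cycleType_mul (disj (by decide) : Equiv.Perm.Disjoint (sw 1 3) (sw 2 5 * (sw 6 7 * (sw 8 9 * sw 10 11)))),
    Equiv.Perm.Disjoint.cycleType_mul (disj (by decide) : Equiv.Perm.Disjoint (sw 2 5) (sw 6 7 * (sw 8 9 * sw 10 11))),
    Equiv.Perm.Disjoint.cycleType_mul (disj (by decide) : Equiv.Perm.Disjoint (sw 6 7) (sw 8 9 * sw 10 11)),
    Equiv.Perm.Disjoint.cycleType_mul (disj (by decide) : Equiv.Perm.Disjoint (sw 8 9) (sw 10 11)),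
    cycleType_sw (by decide), cycleType_sw (by decide), cycleType_sw (by decide),
    cycleType_sw (by decide), cycleType_sw (by decide), cycleType_sw (by decide)]
  decide

private lemma cycleType_t0 : t0.cycleType = Multiset.replicate 6 2 := by
  rw [t0, Equiv.Perm.Disjoint.cycleType_mul (disj (by decide) : Equiv.Perm.Disjoint (sw 0 3) (sw 1 5 * (sw 2 4 * (sw 6 7 * (sw 8 9 * sw 10 11))))),
    Equiv.Perm.Disjoint.cycleType_mul (disj (by decide) : Equiv.Perm.Disjoint (sw 1 5) (sw 2 4 * (sw 6 7 * (sw 8 9 * sw 10 11)))),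
    Equiv.Perm.Disjoint.cycleType_mul (disj (by decide) : Equiv.Perm.Disjoint (sw 2 4) (sw 6 7 * (sw 8 9 * sw 10 11))),
    Equiv.Perm.Disjoint.cycleType_mul (disj (by decide) : Equiv.Perm.Disjoint (sw 6 7) (sw 8 9 * sw 10 11)),
    Equiv.Perm.Disjoint.cycleType_mul (disj (by decide) : Equiv.Perm.Disjoint (sw 8 9) (sw 10 11)),
    cycleType_sw (by decide), cycleType_sw (by decide), cycleType_sw (by decide),
    cycleType_sw (by decide), cycleType_sw (by decide), cycleType_sw (by decide)]
  decide

private lemma cycleType_g0 : g0.cycleType = ({3, 3} : Multiset ℕ) := by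
  rw [g0, Equiv.Perm.Disjoint.cycleType_mul (disj (by decide) : Equiv.Perm.Disjoint (sw 0 1 * sw 0 2) (sw 3 4 * sw 3 5)),
    IsThreeCycle.cycleType (σ := sw 0 1 * sw 0 2)
      (isThreeCycle_swap_mul_swap_same (by decide) (by decide) (by decide)),
    IsThreeCycle.cycleType (σ := sw 3 4 * sw 3 5)
      (isThreeCycle_swap_mul_swap_same (by decide) (by decide) (by decide))]
  rfl

private lemma g0_eq : g0 = t0 * s0 := by decide

/-- Every permutation of cycle type `3²` in `A₁₂` is the product of two involutions of cycle
type `2⁶` in `A₁₂`. -/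
theorem threeCycleSquared_eq_product_2pow6 (g : Equiv.Perm (Fin 12))
    (hgA : g ∈ alternatingGroup (Fin 12))
    (hg : g.cycleType = ({3, 3} : Multiset ℕ)) :
    ∃ s t : Equiv.Perm (Fin 12),
      s ∈ alternatingGroup (Fin 12) ∧ t ∈ alternatingGroup (Fin 12) ∧
      s.cycleType = Multiset.replicate 6 2 ∧ t.cycleType = Multiset.replicate 6 2 ∧
      g = s * t := by
  obtain ⟨c, hc⟩ := isConj_iff.mp
    (isConj_of_cycleType_eq (cycleType_g0.trans hg.symm))
  refine ⟨c * t0 * c⁻¹, c * s0 * c⁻¹, ?_, ?_, ?_, ?_, ?_⟩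
  · rw [mem_alternatingGroup, sign_of_cycleType, cycleType_conj, cycleType_t0]; decide
  · rw [mem_alternatingGroup, sign_of_cycleType, cycleType_conj, cycleType_s0]; decide
  · rw [cycleType_conj, cycleType_t0]
  · rw [cycleType_conj, cycleType_s0]
  · rw [← hc, g0_eq]; group
end

section
/- In the Norton–Sakuma algebra of type 3A with basis {a_{-1}, a_0, a_1, u_ρ}, products a_0·a_1 = (1/2^5)(2a_0 + 2a_1 + a_{-1}) − (3^3·5/2^{11})u_ρ, a_0·u_ρ = (1/3^2)(2a_0 − a_1 − a_{-1}) + (5/2^5)u_ρ (and cyclic analogues permuting indices mod 3), u_ρ·u_ρ = u_ρ, and inner products (a_i,a_j) = 13/2^8 for i≠j, (a_i,u_ρ) = 1/4, (u_ρ,u_ρ) = 8/5, (a_i,a_i) = 1: the bilinear form associates with the product, i.e., (x·y, z) = (x, y·z) for all basis vectors x, y, z. -/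
/-- Structure constants of the Norton–Sakuma algebra of type `3A`, on the basis
`0 ↦ a₋₁`, `1 ↦ a₀`, `2 ↦ a₁`, `3 ↦ u_ρ`. -/
noncomputable def c3A : Fin 4 → Fin 4 → (Fin 4 → ℝ) :=
  ![![![1, 0, 0, 0], ![1/16, 1/16, 1/32, -135/2048],
     ![1/16, 1/32, 1/16, -135/2048], ![2/9, -1/9, -1/9, 5/32]],
    ![![1/16, 1/16, 1/32, -135/2048], ![0, 1, 0, 0],
     ![1/32, 1/16, 1/16, -135/2048], ![-1/9, 2/9, -1/9, 5/32]],
    ![![1/16, 1/32, 1/16, -135/2048], ![1/32, 1/16, 1/16, -135/2048],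
     ![0, 0, 1, 0], ![-1/9, -1/9, 2/9, 5/32]],
    ![![2/9, -1/9, -1/9, 5/32], ![-1/9, 2/9, -1/9, 5/32],
     ![-1/9, -1/9, 2/9, 5/32], ![0, 0, 0, 1]]]

/-- The bilinear product of the Norton–Sakuma algebra of type `3A`. -/
noncomputable def mul3A (u v : Fin 4 → ℝ) : Fin 4 → ℝ :=
  fun k => ∑ i, ∑ j, u i * v j * c3A i j k

/-- The Gram matrix of the inner product of the Norton–Sakuma algebra of type `3A`. -/
noncomputable def B3A : Fin 4 → Fin 4 → ℝ :=
  ![![1, 13/256, 13/256, 1/4], ![13/256, 1, 13/256, 1/4],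
    ![13/256, 13/256, 1, 1/4], ![1/4, 1/4, 1/4, 8/5]]

/-- The inner product of the Norton–Sakuma algebra of type `3A`. -/
noncomputable def form3A (u v : Fin 4 → ℝ) : ℝ :=
  ∑ i, ∑ j, u i * v j * B3A i j

/-- In the Norton–Sakuma algebra of type `3A`, the bilinear form associates with the
algebra product: `(x·y, z) = (x, y·z)`. -/
theorem form3A_assoc (x y z : Fin 4 → ℝ) :
    form3A (mul3A x y) z = form3A x (mul3A y z) := by
  simp only [form3A, mul3A, c3A, B3A, Fin.sum_univ_four, Matrix.cons_val]
  norm_num [Matrix.cons_val_zero, Matrix.cons_val_one, Matrix.head_cons]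
  ring
end
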